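/- Let B be the Cayley graph on the group 𝔽₂^{ms} ≅ [d]^s (with d = 2^m) with generator set U closed under inversion, and let the shifted walk of length k draw b_1 uniformly, then b_{i+1} = shift(b_i + u_i) for independent uniform u_i ∈ U, where shift cyclically rotates the s coordinate blocks. Then for all k ≤ s, the tuple (b_1[1], b_2[1], …, b_k[1]) of first coordinate blocks is uniformly distributed on [d]^k. -/

import Mathlib

open Finset
open Fin.NatCast Fin.CommRing

/-- Cyclic shift of the `s` coordinate blocks. -/
def shiftB {s : ℕ} [NeZero s] {G : Type*} (b : Fin s → G) : Fin s → G :=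
  fun i => b (i + 1)

/-- The shifted walk in the Cayley graph: `b 1 = b`, `b (i+1) = shift (b i + u i)`. -/
def bSeq {s : ℕ} [NeZero s] {G : Type*} [AddGroup G] (b : Fin s → G) (u : ℕ → Fin s → G) :
    ℕ → Fin s → G
  | 0 => b
  | i + 1 => shiftB (bSeq b u i + u i)

/-- The "noise" part of the walk, depending only on `u`. -/
def cW {s : ℕ} [NeZero s] {G : Type*} [AddGroup G] (u : ℕ → Fin s → G) (i : ℕ) : G :=
  bSeq (0 : Fin s → G) u i 0

lemma bSeq_affine {s : ℕ} [NeZero s] {G : Type*} [AddGroup G]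
    (b : Fin s → G) (u : ℕ → Fin s → G) (i : ℕ) :
    ∀ j : Fin s, bSeq b u i j = b (j + (i : Fin s)) + bSeq (0 : Fin s → G) u i j := by
  induction i with
  | zero => intro j; simp [bSeq]
  | succ i ih =>
    intro j
    simp only [bSeq, shiftB, Pi.add_apply, ih (j + 1)]
    rw [add_assoc]
    congr 2
    push_cast
    ring

lemma bSeq_zero_apply {s : ℕ} [NeZero s] {G : Type*} [AddGroup G]
    (b : Fin s → G) (u : ℕ → Fin s → G) (i : ℕ) :
    bSeq b u i 0 = b ((i : Fin s)) + cW u i := by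
  rw [bSeq_affine b u i 0, zero_add]; rfl

/-- The initial segment of `Fin s` as `Fin k`. -/
def finTrunc {k s : ℕ} (hk : k ≤ s) : {i : Fin s // (i : ℕ) < k} ≃ Fin k where
  toFun x := ⟨x.1, x.2⟩
  invFun i := ⟨⟨i, lt_of_lt_of_le i.2 hk⟩, i.2⟩
  left_inv x := Subtype.ext (Fin.ext rfl)
  right_inv i := rfl

lemma finTrunc_key {k s : ℕ} [NeZero s] (hk : k ≤ s) (i : Fin k) :
    ((i : ℕ) : Fin s) = ((finTrunc hk).symm i).1 :=
  Fin.ext (by rw [Fin.val_cast_of_lt (lt_of_lt_of_le i.2 hk)]; rfl)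

lemma sum_shift {k s : ℕ} [NeZero s] (hk : k ≤ s) {G : Type*} [Fintype G] [AddCommGroup G]
    (c : Fin k → G) (F : (Fin k → G) → ℝ) :
    ∑ b : Fin s → G, F (fun i : Fin k => b ((i : ℕ) : Fin s) + c i)
      = (Fintype.card ({i : Fin s // ¬ ((i : ℕ) < k)} → G) : ℝ) * ∑ v : Fin k → G, F v := by
  classical
  set E := Equiv.piEquivPiSubtypeProd (fun i : Fin s => (i : ℕ) < k) (fun _ : Fin s => G) with hE
  rw [← Equiv.sum_comp E.symm
    (fun b : Fin s → G => F (fun i : Fin k => b ((i : ℕ) : Fin s) + c i))]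
  have step1 : ∀ wz : ({i : Fin s // (i : ℕ) < k} → G) × ({i : Fin s // ¬ (i : ℕ) < k} → G),
      F (fun i : Fin k => E.symm wz ((i : ℕ) : Fin s) + c i)
        = F (fun i : Fin k => wz.1 ((finTrunc hk).symm i) + c i) := by
    intro wz
    congr 1
    funext i
    rw [finTrunc_key hk i, hE, Equiv.piEquivPiSubtypeProd_symm_apply,
      dif_pos ((finTrunc hk).symm i).2]
  simp only [step1]
  rw [Fintype.sum_prod_type]
  have step2 : ∑ w : {i : Fin s // (i : ℕ) < k} → G, ∑ _z : {i : Fin s // ¬ (i : ℕ) < k} → G,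
      F (fun i : Fin k => w ((finTrunc hk).symm i) + c i)
      = ∑ w : {i : Fin s // (i : ℕ) < k} → G,
        (Fintype.card ({i : Fin s // ¬ (i : ℕ) < k} → G) : ℝ)
          * F (fun i : Fin k => w ((finTrunc hk).symm i) + c i) := by
    refine Finset.sum_congr rfl fun w _ => ?_
    rw [Finset.sum_const, Fintype.card, nsmul_eq_mul]
  rw [step2, ← Finset.mul_sum]
  congr 1
  rw [← Equiv.sum_comp (Equiv.arrowCongr (finTrunc hk).symm (Equiv.refl G))
    (fun w : {i : Fin s // (i : ℕ) < k} → G =>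
      F (fun i : Fin k => w ((finTrunc hk).symm i) + c i))]
  have step3 : ∀ v : Fin k → G,
      F (fun i : Fin k =>
        (Equiv.arrowCongr (finTrunc hk).symm (Equiv.refl G) v) ((finTrunc hk).symm i) + c i)
        = F (v + c) := by
    intro v
    congr 1
  simp only [step3]
  exact Equiv.sum_comp (Equiv.addRight c) F

lemma card_rel {k s : ℕ} [NeZero s] (hk : k ≤ s) (G : Type*) [Fintype G] :
    Fintype.card (Fin s → G)
      = Fintype.card (Fin k → G) * Fintype.card ({i : Fin s // ¬ ((i : ℕ) < k)} → G) := by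
  classical
  rw [Fintype.card_congr
    (Equiv.piEquivPiSubtypeProd (fun i : Fin s => (i : ℕ) < k) (fun _ : Fin s => G)),
    Fintype.card_prod, Fintype.card_congr (Equiv.arrowCongr (finTrunc hk) (Equiv.refl G))]

theorem stmt6 (m s : ℕ) [NeZero s]
    (U : Finset (Fin s → Fin m → ZMod 2)) (hU : U.Nonempty)
    (hinv : ∀ u ∈ U, -u ∈ U) :
    ∀ k : ℕ, k ≤ s → ∀ F : (Fin k → (Fin m → ZMod 2)) → ℝ,
      (∑ b : Fin s → Fin m → ZMod 2, ∑ u ∈ Fintype.piFinset (fun _ : Fin k => U),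
          F (fun i => bSeq b (fun j => if h : j < k then u ⟨j, h⟩ else 0) (i : ℕ) 0))
        / ((Fintype.card (Fin s → Fin m → ZMod 2) : ℝ) * (U.card : ℝ) ^ (k : ℕ))
      = (∑ v : Fin k → (Fin m → ZMod 2), F v)
        / (Fintype.card (Fin k → Fin m → ZMod 2) : ℝ) := by
  intro k hk F
  classical
  have hnum : (∑ b : Fin s → Fin m → ZMod 2, ∑ u ∈ Fintype.piFinset (fun _ : Fin k => U),
      F (fun i => bSeq b (fun j => if h : j < k then u ⟨j, h⟩ else 0) (i : ℕ) 0))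
      = (U.card : ℝ) ^ k
        * ((Fintype.card ({i : Fin s // ¬ ((i : ℕ) < k)} → Fin m → ZMod 2) : ℝ)
            * ∑ v : Fin k → Fin m → ZMod 2, F v) := by
    rw [Finset.sum_comm]
    have inner : ∀ u ∈ Fintype.piFinset (fun _ : Fin k => U),
        (∑ b : Fin s → Fin m → ZMod 2,
          F (fun i => bSeq b (fun j => if h : j < k then u ⟨j, h⟩ else 0) (i : ℕ) 0))
        = (Fintype.card ({i : Fin s // ¬ ((i : ℕ) < k)} → Fin m → ZMod 2) : ℝ)
            * ∑ v : Fin k → Fin m → ZMod 2, F v := by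
      intro u _
      have hb : ∀ b : Fin s → Fin m → ZMod 2,
          (fun i : Fin k => bSeq b (fun j => if h : j < k then u ⟨j, h⟩ else 0) (i : ℕ) 0)
            = (fun i : Fin k => b (((i : ℕ) : Fin s))
                + cW (fun j => if h : j < k then u ⟨j, h⟩ else 0) (i : ℕ)) := by
        intro b; funext i
        exact bSeq_zero_apply b (fun j => if h : j < k then u ⟨j, h⟩ else 0) (i : ℕ)
      simp only [hb]
      exact sum_shift hk (fun i : Fin k => cW (fun j => if h : j < k then u ⟨j, h⟩ else 0) (i : ℕ)) F
    rw [Finset.sum_congr rfl inner, Finset.sum_const, nsmul_eq_mul, Fintype.card_piFinset]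
    simp
  rw [hnum]
  have hcard : (Fintype.card (Fin s → Fin m → ZMod 2) : ℝ)
      = (Fintype.card (Fin k → Fin m → ZMod 2) : ℝ)
        * (Fintype.card ({i : Fin s // ¬ ((i : ℕ) < k)} → Fin m → ZMod 2) : ℝ) := by
    rw [← Nat.cast_mul, card_rel hk]
  rw [hcard]
  have hC0 : (Fintype.card ({i : Fin s // ¬ ((i : ℕ) < k)} → Fin m → ZMod 2) : ℝ) ≠ 0 :=
    Nat.cast_ne_zero.2 Fintype.card_ne_zero
  have hk0 : (Fintype.card (Fin k → Fin m → ZMod 2) : ℝ) ≠ 0 :=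
    Nat.cast_ne_zero.2 Fintype.card_ne_zero
  have hU0 : (U.card : ℝ) ≠ 0 := Nat.cast_ne_zero.2 (Finset.card_ne_zero_of_mem hU.choose_spec)
  field_simp
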